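/- Let k be a commutative ring, κ ∈ k, and let M be the free k-module with basis {u_n : n ≥ 0} equipped with the k-bilinear product ⋄ determined by u_m ⋄ u_n = Σ_{r=0}^{min(m,n)} C(m+n−r, m)·C(m, r)·κ^r·u_{m+n−2r}. Let P : M → M be the k-linear shift map P(u_n) = u_{n+1}. Then P is a modified Rota-Baxter operator of weight κ on (M, ⋄): P(x) ⋄ P(y) = P(x ⋄ P(y)) + P(P(x) ⋄ y) + κ·(x ⋄ y) for all x, y ∈ M. -/

import Mathlib

/-- The basis vectors `u n = single n 1` of the free `k`-module `ℕ →₀ k`. -/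
noncomputable def uvec {k : Type*} [CommRing k] (n : ℕ) : ℕ →₀ k := Finsupp.single n 1

/-- The shift map `P(u_n) = u_{n+1}` is a modified Rota-Baxter operator of weight `κ` on
the free module with basis `{u_n}` equipped with the modified quasi-shuffle product `⋄`
determined by `u_m ⋄ u_n = Σ_{r=0}^{min(m,n)} C(m+n-r, m) C(m, r) κ^r • u_{m+n-2r}`. -/
theorem stmt_11 {k : Type*} [CommRing k] (κ : k)
    (D : (ℕ →₀ k) →ₗ[k] (ℕ →₀ k) →ₗ[k] (ℕ →₀ k))
    (hD : ∀ m n : ℕ, D (uvec m) (uvec n) =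
      ∑ r ∈ Finset.range (min m n + 1),
        ((((m + n - r).choose m * m.choose r : ℕ) : k) * κ ^ r) •
          (uvec (m + n - 2 * r) : ℕ →₀ k))
    (P : (ℕ →₀ k) →ₗ[k] (ℕ →₀ k))
    (hP : ∀ n : ℕ, P (uvec n) = uvec (n + 1)) :
    ∀ x y : ℕ →₀ k, D (P x) (P y) = P (D x (P y)) + P (D (P x) y) + κ • D x y := by
  have key : ∀ m n : ℕ, D (P (uvec m)) (P (uvec n)) =
      P (D (uvec m) (P (uvec n))) + P (D (P (uvec m)) (uvec n)) + κ • D (uvec m) (uvec n) := by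
    intro m n
    rw [hP, hP, hD, hD, hD, hD, map_sum, map_sum]
    simp only [LinearMap.map_smul, hP]
    -- normalize the left-hand sum
    have e0 : (∑ r ∈ Finset.range (min (m + 1) (n + 1) + 1),
        ((((m + 1 + (n + 1) - r).choose (m + 1) * (m + 1).choose r : ℕ) : k) * κ ^ r) •
          (uvec (m + 1 + (n + 1) - 2 * r) : ℕ →₀ k))
        = ∑ r ∈ Finset.range (min m n + 2), (fun r =>
        ((((m + n + 2 - r).choose (m + 1) * (m + 1).choose r : ℕ) : k) * κ ^ r) •
          (uvec (m + n + 2 - 2 * r) : ℕ →₀ k)) r := by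
      have hmin : min (m + 1) (n + 1) + 1 = min m n + 2 := by omega
      rw [hmin]
      refine Finset.sum_congr rfl fun r hr => ?_
      simp only [Finset.mem_range] at hr
      have h2 : m + 1 + (n + 1) - r = m + n + 2 - r := by omega
      have h3 : m + 1 + (n + 1) - 2 * r = m + n + 2 - 2 * r := by omega
      rw [h2, h3]
    -- extend first P-sum to range (min m n + 2)
    have e1 : (∑ r ∈ Finset.range (min m (n + 1) + 1),
        ((((m + (n + 1) - r).choose m * m.choose r : ℕ) : k) * κ ^ r) •
          (uvec (m + (n + 1) - 2 * r + 1) : ℕ →₀ k))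
        = ∑ r ∈ Finset.range (min m n + 2), (fun r =>
        ((((m + n + 1 - r).choose m * m.choose r : ℕ) : k) * κ ^ r) •
          (uvec (m + n + 2 - 2 * r) : ℕ →₀ k)) r := by
      rw [Finset.sum_congr rfl (g := fun r =>
        ((((m + n + 1 - r).choose m * m.choose r : ℕ) : k) * κ ^ r) •
          (uvec (m + n + 2 - 2 * r) : ℕ →₀ k)) fun r hr => ?_]
      · apply Finset.sum_subset
        · apply Finset.range_subset_range.2; omega
        · intro r hr2 hr
          simp only [Finset.mem_range, not_lt] at hr hr2
          have hm : m < r := by omega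
          rw [Nat.choose_eq_zero_of_lt hm]
          simp
      · simp only [Finset.mem_range] at hr
        have h2 : m + (n + 1) - r = m + n + 1 - r := by omega
        have h3 : m + (n + 1) - 2 * r + 1 = m + n + 2 - 2 * r := by omega
        rw [h2, h3]
    -- extend second P-sum to range (min m n + 2)
    have e2 : (∑ r ∈ Finset.range (min (m + 1) n + 1),
        ((((m + 1 + n - r).choose (m + 1) * (m + 1).choose r : ℕ) : k) * κ ^ r) •
          (uvec (m + 1 + n - 2 * r + 1) : ℕ →₀ k))
        = ∑ r ∈ Finset.range (min m n + 2), (fun r =>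
        ((((m + n + 1 - r).choose (m + 1) * (m + 1).choose r : ℕ) : k) * κ ^ r) •
          (uvec (m + n + 2 - 2 * r) : ℕ →₀ k)) r := by
      rw [Finset.sum_congr rfl (g := fun r =>
        ((((m + n + 1 - r).choose (m + 1) * (m + 1).choose r : ℕ) : k) * κ ^ r) •
          (uvec (m + n + 2 - 2 * r) : ℕ →₀ k)) fun r hr => ?_]
      · apply Finset.sum_subset
        · apply Finset.range_subset_range.2; omega
        · intro r hr2 hr
          simp only [Finset.mem_range, not_lt] at hr hr2
          have hm : m + n + 1 - r < m + 1 := by omega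
          rw [Nat.choose_eq_zero_of_lt hm]
          simp
      · simp only [Finset.mem_range] at hr
        have h2 : m + 1 + n - r = m + n + 1 - r := by omega
        have h3 : m + 1 + n - 2 * r + 1 = m + n + 2 - 2 * r := by omega
        rw [h2, h3]
    -- rewrite the κ-scaled sum as a sum over range (min m n + 2) with a vanishing 0-term
    have e3 : (κ • ∑ r ∈ Finset.range (min m n + 1),
        ((((m + n - r).choose m * m.choose r : ℕ) : k) * κ ^ r) •
          (uvec (m + n - 2 * r) : ℕ →₀ k))
        = ∑ r ∈ Finset.range (min m n + 2), (fun r =>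
        if r = 0 then (0 : ℕ →₀ k) else
          ((((m + n + 1 - r).choose m * m.choose (r - 1) : ℕ) : k) * κ ^ r) •
            (uvec (m + n + 2 - 2 * r) : ℕ →₀ k)) r := by
      rw [Finset.smul_sum, Finset.sum_range_succ' _ (min m n + 1)]
      simp only [eq_self_iff_true, if_true, Nat.succ_ne_zero, if_false, add_zero]
      apply Finset.sum_congr rfl
      intro r hr
      simp only [Finset.mem_range] at hr
      have h2 : m + n + 1 - (r + 1) = m + n - r := by omega
      have h3 : m + n + 2 - 2 * (r + 1) = m + n - 2 * r := by omega
      have h4 : r + 1 - 1 = r := by omega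
      rw [h2, h3, h4, smul_smul, pow_succ]
      congr 1
      ring
    rw [e0, e1, e2, e3, ← Finset.sum_add_distrib, ← Finset.sum_add_distrib]
    refine Finset.sum_congr rfl fun r hr => ?_
    simp only [Finset.mem_range] at hr
    match r with
    | 0 =>
      have hnat0 : (m + n + 2 - 0).choose (m + 1) * (m + 1).choose 0
          = (m + n + 1 - 0).choose m * m.choose 0
          + (m + n + 1 - 0).choose (m + 1) * (m + 1).choose 0 := by
        simp [Nat.choose_succ_succ (m + n + 1) m]
      simp only [if_pos rfl, add_zero, hnat0]
      push_cast
      module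
    | (t + 1) =>
      have h2 : m + n + 2 - (t + 1) = (m + n + 1 - (t + 1)) + 1 := by omega
      have h3 : t + 1 - 1 = t := rfl
      have hnat : (m + n + 2 - (t + 1)).choose (m + 1) * (m + 1).choose (t + 1)
          = (m + n + 1 - (t + 1)).choose m * m.choose (t + 1)
          + (m + n + 1 - (t + 1)).choose (m + 1) * (m + 1).choose (t + 1)
          + (m + n + 1 - (t + 1)).choose m * m.choose t := by
        rw [h2, Nat.choose_succ_succ (m + n + 1 - (t + 1)) m, Nat.choose_succ_succ m t]
        ring
      simp only [Nat.succ_ne_zero, if_false, h3, hnat]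
      push_cast
      module
  intro x y
  induction x using Finsupp.induction_linear with
  | zero => simp
  | add a b ha hb =>
    simp only [map_add, LinearMap.add_apply, smul_add]
    rw [ha, hb]
    abel
  | single a c =>
    induction y using Finsupp.induction_linear with
    | zero => simp
    | add a' b' ha' hb' =>
      simp only [map_add, LinearMap.map_add, smul_add]
      rw [ha', hb']
      abel
    | single a' c' =>
      have hx : (Finsupp.single a c : ℕ →₀ k) = c • uvec a := by
        rw [uvec, Finsupp.smul_single', mul_one]
      have hy : (Finsupp.single a' c' : ℕ →₀ k) = c' • uvec a' := by
        rw [uvec, Finsupp.smul_single', mul_one]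
      rw [hx, hy]
      simp only [map_smul, LinearMap.smul_apply, LinearMap.map_smul]
      rw [key a a']
      simp only [smul_add]
      module
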